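/- arXiv:1905.05083 — 2 statements merged into one kernel-verified Lean document; each statement's English description precedes it below -/
import Mathlib

section
/- For all integers d ≥ 3 and k ≥ 2, the identifying number of the Kautz digraph K(d,k) is γ^ID(K(d,k)) = d^k − d^(k−2). -/
/-- The (open) in-neighbourhood of `v` in the digraph with adjacency relation `A`. -/
def Nminus {V : Type*} (A : V → V → Prop) (v : V) : Set V := {u | A u v}

/-- The out-neighbourhood of `v`. -/
def Nplus {V : Type*} (A : V → V → Prop) (v : V) : Set V := {u | A v u}

/-- The closed in-neighbourhood `N^-[v] = {v} ∪ N^-(v)`. -/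
def NminusClosed {V : Type*} (A : V → V → Prop) (v : V) : Set V := insert v (Nminus A v)

/-- `N^-[S] = ⋃_{v ∈ S} N^-[v]`. -/
def NminusSet {V : Type*} (A : V → V → Prop) (S : Set V) : Set V := ⋃ v ∈ S, NminusClosed A v

/-- A digraph is strongly connected if there is a directed path between any ordered
pair of vertices. -/
def StronglyConnected {V : Type*} (A : V → V → Prop) : Prop :=
  ∀ u v : V, Relation.ReflTransGen A u v

/-- The vertices of the line digraph of `A` are the arcs of `A`. -/
abbrev LineVertex {V : Type*} (A : V → V → Prop) : Type _ := {e : V × V // A e.1 e.2}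

/-- Adjacency in the line digraph: there is an arc from `uv` to `wz` iff `v = w`. -/
def LineAdj {V : Type*} (A : V → V → Prop) (e f : LineVertex A) : Prop := e.val.2 = f.val.1

/-- A digraph admits a `(1,≤ℓ)`-identifying code iff all distinct nonempty vertex subsets of
cardinality at most `ℓ` have distinct closed in-neighbourhoods. -/
def AdmitsIdCode {W : Type*} (R : W → W → Prop) (ℓ : ℕ) : Prop :=
  ∀ X Y : Set W, X.Nonempty → Y.Nonempty → X.ncard ≤ ℓ → Y.ncard ≤ ℓ → X ≠ Y →
    NminusSet R X ≠ NminusSet R Y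

/-- `C` is a `(1,≤1)`-identifying code: a dominating set separating closed
in-neighbourhoods of distinct vertices. -/
def IsIdCode {W : Type*} (R : W → W → Prop) (C : Set W) : Prop :=
  (∀ v : W, v ∈ C ∨ ∃ u ∈ C, R u v) ∧
  ∀ x y : W, x ≠ y → NminusClosed R x ∩ C ≠ NminusClosed R y ∩ C

/-- The identifying number: minimum size of a `(1,≤1)`-identifying code. -/
noncomputable def idNumber {W : Type*} (R : W → W → Prop) : ℕ :=
  sInf {n | ∃ C : Set W, IsIdCode R C ∧ C.ncard = n}

/-- The set of arcs of `A` with head `v`. -/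
def omegaMinus {V : Type*} (A : V → V → Prop) (v : V) : Set (V × V) :=
  {p | A p.1 p.2 ∧ p.2 = v}

/-- The set of arcs of `A` with tail `v`. -/
def omegaPlus {V : Type*} (A : V → V → Prop) (v : V) : Set (V × V) :=
  {p | A p.1 p.2 ∧ p.1 = v}

/-- `C` is an arc-identifying code of the digraph `A`: an arc-dominating and
arc-separating set of arcs. -/
def IsArcIdCode {V : Type*} (A : V → V → Prop) (C : Set (V × V)) : Prop :=
  (∀ p : V × V, A p.1 p.2 → ((insert p (omegaMinus A p.1)) ∩ C).Nonempty) ∧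
  ∀ p q : V × V, A p.1 p.2 → A q.1 q.2 → p ≠ q →
    (insert p (omegaMinus A p.1)) ∩ C ≠ (insert q (omegaMinus A q.1)) ∩ C

/-- Vertices of the Kautz digraph `K(d,k)`: words of length `k` over an alphabet of
`d+1` symbols with no two consecutive symbols equal. -/
def KautzVertex (d k : ℕ) : Type :=
  {x : Fin k → Fin (d + 1) // ∀ i j : Fin k, (j : ℕ) = (i : ℕ) + 1 → x i ≠ x j}

/-- Adjacency in the Kautz digraph: there is an arc from `x₁x₂…x_k` to `x₂…x_k y`. -/
def KautzAdj (d k : ℕ) (x y : KautzVertex d k) : Prop :=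
  ∀ i j : Fin k, (j : ℕ) = (i : ℕ) + 1 → y.val i = x.val j

namespace KP

abbrev KW (d m : ℕ) := {x : Fin m → Fin (d + 1) // ∀ i j : Fin m, (j : ℕ) = (i : ℕ) + 1 → x i ≠ x j}

instance (d k : ℕ) : Fintype (KautzVertex d k) := inferInstanceAs (Fintype (KW d k))

variable {d : ℕ}

def encAux (a b : Fin (d + 1)) (h : b ≠ a) : Fin d :=
  if hlt : b.val < a.val then ⟨b.val, by have := a.2; omega⟩
  else ⟨b.val - 1, by
    have hv : b.val ≠ a.val := fun h' => h (Fin.ext h')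
    have := b.2; omega⟩

def decAux (a : Fin (d + 1)) (j : Fin d) : Fin (d + 1) :=
  if j.val < a.val then ⟨j.val, by have := j.2; omega⟩ else ⟨j.val + 1, by have := j.2; omega⟩

lemma decAux_ne (a : Fin (d + 1)) (j : Fin d) : decAux a j ≠ a := by
  unfold decAux; split_ifs with h <;> (intro he; have := congrArg Fin.val he; simp at this; omega)

lemma decAux_val (a : Fin (d + 1)) (j : Fin d) :
    (decAux a j).val = if j.val < a.val then j.val else j.val + 1 := by
  unfold decAux; split_ifs <;> rfl

lemma encAux_val (a b : Fin (d + 1)) (h : b ≠ a) :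
    (encAux a b h).val = if b.val < a.val then b.val else b.val - 1 := by
  unfold encAux; split_ifs <;> rfl

lemma enc_dec (a : Fin (d + 1)) (j : Fin d) : encAux a (decAux a j) (decAux_ne a j) = j := by
  have hj := j.2
  apply Fin.ext
  rw [encAux_val, decAux_val]
  split_ifs <;> omega

lemma dec_enc (a b : Fin (d + 1)) (h : b ≠ a) : decAux a (encAux a b h) = b := by
  have hv : b.val ≠ a.val := fun h' => h (Fin.ext h')
  have hb := b.2
  apply Fin.ext
  rw [decAux_val, encAux_val]
  split_ifs <;> omega

def e1 : KW d 1 ≃ Fin (d + 1) where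
  toFun x := x.val 0
  invFun a := ⟨fun _ => a, by intro i j hij; have := i.2; have := j.2; omega⟩
  left_inv x := by
    apply Subtype.ext; funext i
    have : i = 0 := Subsingleton.elim _ _
    rw [this]
  right_inv a := rfl

def eS (m : ℕ) : KW d (m + 2) ≃ KW d (m + 1) × Fin d where
  toFun x :=
    (⟨fun i => x.val i.castSucc, by
        intro i j hij
        exact x.prop i.castSucc j.castSucc (by simpa using hij)⟩,
     encAux (x.val ⟨m, by omega⟩) (x.val ⟨m + 1, by omega⟩)
       (Ne.symm (x.prop ⟨m, by omega⟩ ⟨m + 1, by omega⟩ rfl)))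
  invFun p :=
    ⟨fun i => if h : i.val < m + 1 then p.1.val ⟨i.val, h⟩ else decAux (p.1.val ⟨m, by omega⟩) p.2,
     by
      intro i j hij
      by_cases hj : j.val < m + 1
      · have hi : i.val < m + 1 := by omega
        simp only [dif_pos hi, dif_pos hj]
        exact p.1.prop ⟨i.val, hi⟩ ⟨j.val, hj⟩ (by simpa using hij)
      · have hj' : j.val = m + 1 := by have := j.2; omega
        have hi : i.val < m + 1 := by omega
        have hi' : i.val = m := by omega
        simp only [dif_pos hi, dif_neg hj]
        have hmk : (⟨i.val, hi⟩ : Fin (m + 1)) = ⟨m, by omega⟩ := Fin.ext hi'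
        rw [hmk]
        exact (decAux_ne _ _).symm⟩
  left_inv x := by
    apply Subtype.ext; funext i
    by_cases h : i.val < m + 1
    · simp only [dif_pos h]
      exact congrArg x.val (Fin.ext rfl)
    · simp only [dif_neg h]
      have hi : i = ⟨m + 1, by omega⟩ := Fin.ext (by have := i.2; simp; omega)
      rw [hi]
      exact dec_enc _ _ _
  right_inv p := by
    refine Prod.ext ?_ ?_
    · apply Subtype.ext; funext i
      have h : (i.castSucc : Fin (m+2)).val < m + 1 := by have := i.2; simpa using this
      simp only [dif_pos h]
      exact congrArg p.1.val (Fin.ext rfl)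
    · have h1 : ¬ ((⟨m + 1, by omega⟩ : Fin (m + 2)).val < m + 1) := by simp
      have h0 : ((⟨m, by omega⟩ : Fin (m + 2)).val < m + 1) := by simp
      dsimp only
      simp only [dif_neg h1, dif_pos h0]
      exact enc_dec _ _

lemma card_KW (m : ℕ) : Fintype.card (KW d (m + 1)) = (d + 1) * d ^ m := by
  induction m with
  | zero => rw [Fintype.card_congr e1, Fintype.card_fin]; ring
  | succ n ih =>
    rw [Fintype.card_congr (eS n), Fintype.card_prod, ih, Fintype.card_fin]
    ring

lemma card_kautz {k : ℕ} (h : 1 ≤ k) : Fintype.card (KautzVertex d k) = (d + 1) * d ^ (k - 1) := by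
  obtain ⟨m, rfl⟩ : ∃ m, k = m + 1 := ⟨k - 1, by omega⟩
  show Fintype.card (KW d (m+1)) = (d + 1) * d ^ (m + 1 - 1)
  simpa using (card_KW m : Fintype.card (KW d (m+1)) = _)

variable {k : ℕ}

lemma val_congr {n : ℕ} (x : KautzVertex d n) {a b : Fin n} (h : a.val = b.val) :
    x.val a = x.val b := congrArg x.val (Fin.ext h)

def pre (hk : 2 ≤ k) (x : KautzVertex d k) : KautzVertex d (k - 1) :=
  ⟨fun i => x.val ⟨i.val, by have := i.2; omega⟩, by
    intro i j hij
    exact x.prop ⟨i.val, by have := i.2; omega⟩ ⟨j.val, by have := j.2; omega⟩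
      (by simpa using hij)⟩

lemma adj_iff {u v : KautzVertex d k} :
    KautzAdj d k u v ↔ ∀ (i : ℕ) (h : i + 1 < k), v.val ⟨i, by omega⟩ = u.val ⟨i + 1, h⟩ := by
  constructor
  · intro H i h
    exact H ⟨i, by omega⟩ ⟨i + 1, h⟩ rfl
  · intro H i j hij
    have h2 : i.val + 1 < k := by have := j.2; omega
    have hh := H i.val h2
    have e1 : (⟨i.val, by omega⟩ : Fin k) = i := Fin.ext rfl
    have e2 : (⟨i.val + 1, h2⟩ : Fin k) = j := Fin.ext (by simp; omega)
    rwa [e1, e2] at hh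

lemma val01_ne (hk : 2 ≤ k) (x : KautzVertex d k) :
    x.val ⟨0, by omega⟩ ≠ x.val ⟨1, by omega⟩ :=
  x.prop ⟨0, by omega⟩ ⟨1, by omega⟩ (by simp)

def mkIn (hk : 2 ≤ k) (x : KautzVertex d k) (z : Fin (d + 1))
    (hz : z ≠ x.val ⟨0, by omega⟩) : KautzVertex d k :=
  ⟨fun i => if h : i.val = 0 then z else x.val ⟨i.val - 1, by have := i.2; omega⟩, by
    intro i j hij
    have hj := j.2
    by_cases hi : i.val = 0
    · have hj0 : ¬ (j.val = 0) := by omega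
      simp only [dif_pos hi, dif_neg hj0]
      intro he
      exact hz (he.trans (val_congr x (by simp; omega)))
    · have hj0 : ¬ (j.val = 0) := by omega
      simp only [dif_neg hi, dif_neg hj0]
      exact x.prop _ _ (by simp; omega)⟩

lemma mkIn_val0 (hk : 2 ≤ k) (x : KautzVertex d k) (z : Fin (d + 1))
    (hz : z ≠ x.val ⟨0, by omega⟩) : (mkIn hk x z hz).val ⟨0, by omega⟩ = z := rfl

lemma mkIn_adj (hk : 2 ≤ k) (x : KautzVertex d k) (z : Fin (d + 1))
    (hz : z ≠ x.val ⟨0, by omega⟩) : KautzAdj d k (mkIn hk x z hz) x := by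
  rw [adj_iff]
  intro i h
  show x.val ⟨i, by omega⟩ = if h' : (i + 1 : ℕ) = 0 then z else x.val ⟨i + 1 - 1, by omega⟩
  rw [dif_neg (by omega)]
  exact val_congr x (by simp)

lemma adj_val' {u v : KautzVertex d k} (h : KautzAdj d k u v) (j : Fin k) (hj : 1 ≤ j.val) :
    u.val j = v.val ⟨j.val - 1, by have := j.2; omega⟩ := by
  have hi1 : (j.val - 1) + 1 < k := by have := j.2; omega
  have h1 := adj_iff.mp h (j.val - 1) hi1
  rw [val_congr u (a := j) (b := ⟨j.val - 1 + 1, hi1⟩) (by simp; omega)]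
  exact h1.symm

lemma in_nbr_ext (hk : 2 ≤ k) {x u u' : KautzVertex d k} (h : KautzAdj d k u x)
    (h' : KautzAdj d k u' x) (h0 : u.val ⟨0, by omega⟩ = u'.val ⟨0, by omega⟩) : u = u' := by
  apply Subtype.ext; funext i
  by_cases hi : 1 ≤ i.val
  · rw [adj_val' h i hi, adj_val' h' i hi]
  · have hz : i.val = 0 := by omega
    rw [val_congr u (b := ⟨0, by omega⟩) (by simp [hz]), h0]
    exact (val_congr u' (a := ⟨0, by omega⟩) (b := i) (by simp [hz]))

lemma adj_val0_ne (hk : 2 ≤ k) {u x : KautzVertex d k} (h : KautzAdj d k u x) :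
    u.val ⟨0, by omega⟩ ≠ x.val ⟨0, by omega⟩ := by
  have h1 := val01_ne hk u
  have h2 := adj_val' h ⟨1, by omega⟩ (by simp)
  intro he
  exact h1 (he.trans ((val_congr x (by simp)).trans h2.symm))

lemma pre_eq_of_adj_adj (hk : 2 ≤ k) {x y u : KautzVertex d k}
    (h : KautzAdj d k u x) (h' : KautzAdj d k u y) : pre hk x = pre hk y := by
  apply Subtype.ext; funext i
  have hi : i.val + 1 < k := by have := i.2; omega
  have e1 := adj_iff.mp h i.val hi
  have e2 := adj_iff.mp h' i.val hi
  exact e1.trans e2.symm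

lemma pre_eq_val (hk : 2 ≤ k) {x y : KautzVertex d k} (hp : pre hk x = pre hk y)
    (i : ℕ) (hi : i < k - 1) : x.val ⟨i, by omega⟩ = y.val ⟨i, by omega⟩ :=
  congrFun (congrArg Subtype.val hp) ⟨i, hi⟩

lemma not_adj_of_pre_eq (hk : 2 ≤ k) {x y : KautzVertex d k}
    (hp : pre hk x = pre hk y) : ¬ KautzAdj d k x y := by
  intro hA
  have h1 := adj_iff.mp hA 0 (by omega)
  have h2 := pre_eq_val hk hp 0 (by omega)
  exact val01_ne hk x (h2.trans h1)

lemma nminus_eq (hk : 2 ≤ k) {x y : KautzVertex d k} (hp : pre hk x = pre hk y) :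
    Nminus (KautzAdj d k) x = Nminus (KautzAdj d k) y := by
  ext u
  show KautzAdj d k u x ↔ KautzAdj d k u y
  rw [adj_iff, adj_iff]
  constructor
  · intro H i hi
    exact (pre_eq_val hk hp i (by omega)).symm.trans (H i hi)
  · intro H i hi
    exact (pre_eq_val hk hp i (by omega)).trans (H i hi)

def sg (a : Fin (d + 1)) : Fin (d + 1) := ⟨(a.val + 1) % (d + 1), Nat.mod_lt _ (by omega)⟩

lemma sg_val (a : Fin (d + 1)) : (sg a).val = if a.val = d then 0 else a.val + 1 := by
  unfold sg
  by_cases h : a.val = d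
  · simp [h]
  · have hlt : a.val + 1 < d + 1 := by have := a.2; omega
    simp [h, Nat.mod_eq_of_lt hlt]

lemma sg_inj {a b : Fin (d + 1)} (h : sg a = sg b) : a = b := by
  have hv := congrArg Fin.val h
  rw [sg_val, sg_val] at hv
  have ha := a.2; have hb := b.2
  apply Fin.ext
  split_ifs at hv <;> omega

lemma sg_ne (hd : 1 ≤ d) (a : Fin (d + 1)) : sg a ≠ a := by
  intro h
  have hv := congrArg Fin.val h
  rw [sg_val] at hv
  have ha := a.2
  split_ifs at hv <;> omega

variable {m : ℕ}

def Fw (hm : 1 ≤ m) (w : KautzVertex d m) : Fin (d + 1) :=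
  if sg (w.val ⟨0, by omega⟩) = w.val ⟨m - 1, by omega⟩ then
    sg (w.val ⟨1 % m, Nat.mod_lt _ (by omega)⟩)
  else sg (w.val ⟨0, by omega⟩)

lemma Fw_ne_last (hd : 1 ≤ d) (hm : 1 ≤ m) (w : KautzVertex d m) :
    Fw hm w ≠ w.val ⟨m - 1, by omega⟩ := by
  unfold Fw
  split_ifs with hc
  · intro he
    by_cases hm1 : m = 1
    · rw [val_congr w (a := ⟨1 % m, Nat.mod_lt _ (by omega)⟩) (b := ⟨0, by omega⟩)
        (by simp [hm1])] at he
      rw [val_congr w (a := ⟨m - 1, by omega⟩) (b := ⟨0, by omega⟩) (by simp [hm1])] at he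
      exact sg_ne hd _ he
    · have h1m : 1 % m = 1 := Nat.mod_eq_of_lt (by omega)
      have he2 : sg (w.val ⟨1 % m, Nat.mod_lt _ (by omega)⟩) = sg (w.val ⟨0, by omega⟩) :=
        he.trans hc.symm
      have := sg_inj he2
      rw [val_congr w (a := ⟨1 % m, Nat.mod_lt _ (by omega)⟩) (b := ⟨1, by omega⟩)
        (by simp [h1m])] at this
      exact w.prop ⟨0, by omega⟩ ⟨1, by omega⟩ (by simp) this.symm
  · exact hc

lemma Fw_shape (hm : 1 ≤ m) (w : KautzVertex d m) :
    Fw hm w = sg (w.val ⟨0, by omega⟩) ∨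
      (sg (w.val ⟨0, by omega⟩) = w.val ⟨m - 1, by omega⟩ ∧
        Fw hm w = sg (w.val ⟨1 % m, Nat.mod_lt _ (by omega)⟩)) := by
  unfold Fw
  split_ifs with hc
  · exact Or.inr ⟨hc, rfl⟩
  · exact Or.inl rfl

def Tmem (hk : 2 ≤ k) (x : KautzVertex d k) : Prop :=
  x.val ⟨k - 1, by omega⟩ = Fw (by omega) (pre hk x)

lemma T_unique (hk : 2 ≤ k) {x y : KautzVertex d k} (hp : pre hk x = pre hk y)
    (hx : Tmem hk x) (hy : Tmem hk y) : x = y := by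
  apply Subtype.ext; funext i
  by_cases hi : i.val < k - 1
  · rw [val_congr x (b := ⟨i.val, by omega⟩) rfl, pre_eq_val hk hp i.val hi]
  · have hieq : i.val = k - 1 := by have := i.2; omega
    rw [val_congr x (b := ⟨k - 1, by omega⟩) (by simp [hieq]), hx, hp, ← hy]
    exact val_congr y (by simp [hieq])

set_option maxHeartbeats 2000000 in
lemma uniq_T_in (hd : 1 ≤ d) (hk : 2 ≤ k) {x u u' : KautzVertex d k}
    (h : KautzAdj d k u x) (h' : KautzAdj d k u' x)
    (hT : Tmem hk u) (hT' : Tmem hk u') : u = u' := by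
  have hm : (1 : ℕ) ≤ k - 1 := by omega
  have key : ∀ (w : KautzVertex d k), KautzAdj d k w x → Tmem hk w →
      Fw hm (pre hk w) = x.val ⟨k - 2, by omega⟩ := by
    intro w hw hTw
    have h1 := adj_val' hw ⟨k - 1, by omega⟩ (by simp; omega)
    exact hTw.symm.trans (h1.trans (val_congr x (by simp; omega)))
  apply in_nbr_ext hk h h'
  rcases Fw_shape hm (pre hk u) with s1 | ⟨c1, s1⟩ <;>
    rcases Fw_shape hm (pre hk u') with s2 | ⟨c2, s2⟩
  · -- both plain
    have e1 : sg (u.val ⟨0, by omega⟩) = x.val ⟨k - 2, by omega⟩ := s1.symm.trans (key u h hT)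
    have e2 : sg (u'.val ⟨0, by omega⟩) = x.val ⟨k - 2, by omega⟩ := s2.symm.trans (key u' h' hT')
    exact sg_inj (e1.trans e2.symm)
  · -- u plain, u' branch2
    by_cases hk3 : 3 ≤ k
    · have c2' : sg (u'.val ⟨0, by omega⟩) = u'.val ⟨k - 2, by omega⟩ := c2
      have e1 : sg (u.val ⟨0, by omega⟩) = x.val ⟨k - 2, by omega⟩ := s1.symm.trans (key u h hT)
      have h1m : 1 % (k - 1) = 1 := Nat.mod_eq_of_lt (by omega)
      have s2' : Fw hm (pre hk u') = sg (u'.val ⟨1, by omega⟩) := by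
        refine s2.trans (congrArg sg ?_)
        exact val_congr u' (by simp [h1m])
      have e2 : sg (u'.val ⟨1, by omega⟩) = x.val ⟨k - 2, by omega⟩ := s2'.symm.trans (key u' h' hT')
      have e3 : u'.val ⟨1, by omega⟩ = x.val ⟨0, by omega⟩ :=
        (adj_val' h' ⟨1, by omega⟩ (by simp)).trans (val_congr x (by simp))
      have e4 : sg (x.val ⟨0, by omega⟩) = x.val ⟨k - 2, by omega⟩ :=
        (congrArg sg e3).symm.trans e2
      have : u.val ⟨0, by omega⟩ = x.val ⟨0, by omega⟩ := sg_inj (e1.trans e4.symm)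
      exact absurd this (adj_val0_ne hk h)
    · have hk2 : k = 2 := by omega
      have c2' : sg (u'.val ⟨0, by omega⟩) = u'.val ⟨k - 1 - 1, by omega⟩ := c2
      have c2'' : sg (u'.val ⟨0, by omega⟩) = u'.val ⟨0, by omega⟩ :=
        c2'.trans (val_congr u' (by simp; omega))
      exact absurd c2'' (sg_ne hd _)
  · -- u branch2, u' plain
    by_cases hk3 : 3 ≤ k
    · have e1 : sg (u'.val ⟨0, by omega⟩) = x.val ⟨k - 2, by omega⟩ := s2.symm.trans (key u' h' hT')
      have h1m : 1 % (k - 1) = 1 := Nat.mod_eq_of_lt (by omega)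
      have s1' : Fw hm (pre hk u) = sg (u.val ⟨1, by omega⟩) := by
        refine s1.trans (congrArg sg ?_)
        exact val_congr u (by simp [h1m])
      have e2 : sg (u.val ⟨1, by omega⟩) = x.val ⟨k - 2, by omega⟩ := s1'.symm.trans (key u h hT)
      have e3 : u.val ⟨1, by omega⟩ = x.val ⟨0, by omega⟩ :=
        (adj_val' h ⟨1, by omega⟩ (by simp)).trans (val_congr x (by simp))
      have e4 : sg (x.val ⟨0, by omega⟩) = x.val ⟨k - 2, by omega⟩ :=
        (congrArg sg e3).symm.trans e2
      have : u'.val ⟨0, by omega⟩ = x.val ⟨0, by omega⟩ := sg_inj (e1.trans e4.symm)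
      exact absurd this (adj_val0_ne hk h')
    · have hk2 : k = 2 := by omega
      have c1' : sg (u.val ⟨0, by omega⟩) = u.val ⟨k - 1 - 1, by omega⟩ := c1
      have c1'' : sg (u.val ⟨0, by omega⟩) = u.val ⟨0, by omega⟩ :=
        c1'.trans (val_congr u (by simp; omega))
      exact absurd c1'' (sg_ne hd _)
  · -- both branch2
    by_cases hk3 : 3 ≤ k
    · have c1' : sg (u.val ⟨0, by omega⟩) = u.val ⟨k - 1 - 1, by omega⟩ := c1
      have c2' : sg (u'.val ⟨0, by omega⟩) = u'.val ⟨k - 1 - 1, by omega⟩ := c2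
      have e1 : u.val ⟨k - 1 - 1, by omega⟩ = x.val ⟨k - 3, by omega⟩ := by
        refine (val_congr u (b := ⟨k - 2, by omega⟩) (by simp; omega)).trans ?_
        exact (adj_val' h ⟨k - 2, by omega⟩ (by simp; omega)).trans (val_congr x (by simp; omega))
      have e2 : u'.val ⟨k - 1 - 1, by omega⟩ = x.val ⟨k - 3, by omega⟩ := by
        refine (val_congr u' (b := ⟨k - 2, by omega⟩) (by simp; omega)).trans ?_
        exact (adj_val' h' ⟨k - 2, by omega⟩ (by simp; omega)).trans (val_congr x (by simp; omega))
      exact sg_inj ((c1'.trans e1).trans (c2'.trans e2).symm)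
    · have hk2 : k = 2 := by omega
      have c1' : sg (u.val ⟨0, by omega⟩) = u.val ⟨k - 1 - 1, by omega⟩ := c1
      have c1'' : sg (u.val ⟨0, by omega⟩) = u.val ⟨0, by omega⟩ :=
        c1'.trans (val_congr u (by simp; omega))
      exact absurd c1'' (sg_ne hd _)

def Cset (hk : 2 ≤ k) : Set (KautzVertex d k) := {x | Tmem hk x}ᶜ

lemma exists_good (hd : 3 ≤ d) (hk : 2 ≤ k) (x : KautzVertex d k) (wb : Fin (d + 1)) :
    ∃ u, KautzAdj d k u x ∧ ¬ Tmem hk u ∧ u.val ⟨0, by omega⟩ ≠ wb := by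
  classical
  set s : Finset (Fin (d + 1)) := ({x.val ⟨0, by omega⟩, wb} : Finset _)ᶜ with hs
  have hcard : 1 < s.card := by
    rw [hs, Finset.card_compl]
    have h2 : ({x.val ⟨0, by omega⟩, wb} : Finset (Fin (d + 1))).card ≤ 2 :=
      (Finset.card_insert_le _ _).trans (by simp)
    rw [Fintype.card_fin]
    omega
  obtain ⟨z1, hz1, z2, hz2, hne⟩ := Finset.one_lt_card.mp hcard
  rw [hs, Finset.mem_compl, Finset.mem_insert, Finset.mem_singleton] at hz1 hz2
  push_neg at hz1 hz2
  refine ?_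
  by_cases hT1 : Tmem hk (mkIn hk x z1 hz1.1)
  · by_cases hT2 : Tmem hk (mkIn hk x z2 hz2.1)
    · exfalso
      have heq := uniq_T_in (by omega) hk (mkIn_adj hk x z1 hz1.1) (mkIn_adj hk x z2 hz2.1) hT1 hT2
      apply hne
      rw [← mkIn_val0 hk x z1 hz1.1, ← mkIn_val0 hk x z2 hz2.1, heq]
    · exact ⟨mkIn hk x z2 hz2.1, mkIn_adj hk x z2 hz2.1, hT2,
        by rw [mkIn_val0]; exact hz2.2⟩
  · exact ⟨mkIn hk x z1 hz1.1, mkIn_adj hk x z1 hz1.1, hT1,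
      by rw [mkIn_val0]; exact hz1.2⟩

lemma isIdCode_C (hd : 3 ≤ d) (hk : 2 ≤ k) :
    IsIdCode (KautzAdj d k) (Cset (d := d) hk) := by
  constructor
  · intro v
    right
    obtain ⟨u, hadj, hu, _⟩ := exists_good hd hk v (v.val ⟨0, by omega⟩)
    exact ⟨u, hu, hadj⟩
  · intro x y hxy heq
    by_cases hp : pre hk x = pre hk y
    · have key : ∀ a b : KautzVertex d k, a ≠ b → pre hk a = pre hk b →
          NminusClosed (KautzAdj d k) a ∩ Cset hk = NminusClosed (KautzAdj d k) b ∩ Cset hk →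
          ¬ Tmem hk a → False := by
        intro a b hab hpab heqab hTa
        have ha : a ∈ NminusClosed (KautzAdj d k) a ∩ Cset hk := ⟨Set.mem_insert _ _, hTa⟩
        rw [heqab] at ha
        rcases ha.1 with hh | hh
        · exact hab hh
        · exact not_adj_of_pre_eq hk hpab hh
      have hnboth : ¬ (Tmem hk x ∧ Tmem hk y) := fun ⟨h1, h2⟩ => hxy (T_unique hk hp h1 h2)
      rcases not_and_or.mp hnboth with hTx | hTy
      · exact key x y hxy hp heq hTx
      · exact key y x (Ne.symm hxy) hp.symm heq.symm hTy
    · obtain ⟨u, hadj, hu, h0⟩ := exists_good hd hk x (y.val ⟨0, by omega⟩)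
      have hmem : u ∈ NminusClosed (KautzAdj d k) x ∩ Cset hk :=
        ⟨Set.mem_insert_of_mem _ hadj, hu⟩
      rw [heq] at hmem
      rcases hmem.1 with hh | hh
      · exact h0 (by rw [hh])
      · exact hp (pre_eq_of_adj_adj hk hadj hh)

def ext1 (hd : 1 ≤ d) (hk : 2 ≤ k) (w : KautzVertex d (k - 1)) : KautzVertex d k :=
  ⟨fun i => if h : i.val < k - 1 then w.val ⟨i.val, h⟩ else Fw (by omega) w, by
    intro i j hij
    have hj := j.2
    by_cases hjlt : j.val < k - 1
    · have hilt : i.val < k - 1 := by omega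
      simp only [dif_pos hilt, dif_pos hjlt]
      exact w.prop _ _ (by simp; omega)
    · have hilt : i.val < k - 1 := by omega
      have hieq : i.val = k - 2 := by omega
      simp only [dif_pos hilt, dif_neg hjlt]
      intro he
      exact Fw_ne_last hd (by omega) w
        (he.symm.trans (val_congr w (by simp; omega)))⟩

lemma pre_ext1 (hd : 1 ≤ d) (hk : 2 ≤ k) (w : KautzVertex d (k - 1)) :
    pre hk (ext1 hd hk w) = w := by
  apply Subtype.ext; funext i
  have hstep : (pre hk (ext1 hd hk w)).val i =
      if h : (i.val : ℕ) < k - 1 then w.val ⟨i.val, h⟩ else Fw (by omega) w := rfl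
  rw [hstep, dif_pos i.2]

lemma Tmem_ext1 (hd : 1 ≤ d) (hk : 2 ≤ k) (w : KautzVertex d (k - 1)) :
    Tmem hk (ext1 hd hk w) := by
  show (ext1 hd hk w).val ⟨k - 1, by omega⟩ = _
  have hstep : (ext1 hd hk w).val ⟨k - 1, by omega⟩ =
      if h : ((k - 1 : ℕ)) < k - 1 then w.val ⟨k - 1, h⟩ else Fw (by omega) w := rfl
  rw [hstep, dif_neg (by omega)]
  rw [pre_ext1 hd hk w]

lemma ncard_T (hd : 1 ≤ d) (hk : 2 ≤ k) :
    ({x | Tmem hk x} : Set (KautzVertex d k)).ncard = (d + 1) * d ^ (k - 2) := by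
  have hbij : Function.Bijective
      (fun u : {x : KautzVertex d k // Tmem hk x} => pre hk u.val) := by
    constructor
    · intro a b hab
      exact Subtype.ext (T_unique hk hab a.2 b.2)
    · intro w
      exact ⟨⟨ext1 hd hk w, Tmem_ext1 hd hk w⟩, pre_ext1 hd hk w⟩
  have h1 : Nat.card {x : KautzVertex d k // Tmem hk x} = Nat.card (KautzVertex d (k - 1)) :=
    Nat.card_congr (Equiv.ofBijective _ hbij)
  have h1' : Nat.card {x : KautzVertex d k // Tmem hk x} = (d + 1) * d ^ (k - 2) := by
    rw [h1, Nat.card_eq_fintype_card, card_kautz (by omega),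
      show k - 1 - 1 = k - 2 from by omega]
  have h2 : ({x | Tmem hk x} : Set (KautzVertex d k)).ncard
      = Nat.card {x : KautzVertex d k // Tmem hk x} := (Nat.card_coe_set_eq _).symm
  rw [h2, h1']

lemma ncard_C (hd : 3 ≤ d) (hk : 2 ≤ k) :
    (Cset (d := d) hk).ncard = d ^ k - d ^ (k - 2) := by
  have h1 := Set.ncard_add_ncard_compl ({x | Tmem hk x} : Set (KautzVertex d k))
  rw [Nat.card_eq_fintype_card, card_kautz (by omega), ncard_T (by omega) hk] at h1
  have e1 : k - 1 = (k - 2) + 1 := by omega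
  have e2 : k = (k - 2) + 2 := by omega
  set a := d ^ (k - 2) with ha
  have hb : d ^ (k - 1) = a * d := by rw [e1, pow_succ]
  have hcc : d ^ k = a * d * d := by
    rw [e2, pow_add, ha]; ring
  have h3 : (d + 1) * (a * d) = a * d * d + a * d := by ring
  have h4 : (d + 1) * a = a * d + a := by ring
  have ha1 : a ≤ a * d := by
    have := Nat.mul_le_mul_left a (show 1 ≤ d by omega)
    simpa using this
  have ha2 : a * d ≤ a * d * d := by
    have := Nat.mul_le_mul_left (a * d) (show 1 ≤ d by omega)
    simpa using this
  rw [hb, h3, h4] at h1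
  show ({x | Tmem hk x} : Set (KautzVertex d k))ᶜ.ncard = d ^ k - a
  rw [hcc]
  omega

lemma lower_bound (hd : 3 ≤ d) (hk : 2 ≤ k) (C : Set (KautzVertex d k))
    (hC : IsIdCode (KautzAdj d k) C) : d ^ k - d ^ (k - 2) ≤ C.ncard := by
  classical
  have hinj : Set.InjOn (pre hk) Cᶜ := by
    intro a ha b hb hab2
    by_contra hne
    apply hC.2 a b hne
    have h1 : NminusClosed (KautzAdj d k) a ∩ C = Nminus (KautzAdj d k) a ∩ C :=
      Set.insert_inter_of_notMem ha
    have h2 : NminusClosed (KautzAdj d k) b ∩ C = Nminus (KautzAdj d k) b ∩ C :=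
      Set.insert_inter_of_notMem hb
    rw [h1, h2, nminus_eq hk hab2]
  have hle : (Cᶜ).ncard ≤ (Set.univ : Set (KautzVertex d (k - 1))).ncard :=
    Set.ncard_le_ncard_of_injOn (pre hk) (fun a _ => Set.mem_univ _) hinj Set.finite_univ
  rw [Set.ncard_univ, Nat.card_eq_fintype_card, card_kautz (by omega),
    show k - 1 - 1 = k - 2 from by omega] at hle
  have hsum := Set.ncard_add_ncard_compl C
  rw [Nat.card_eq_fintype_card, card_kautz (by omega)] at hsum
  have e1 : k - 1 = (k - 2) + 1 := by omega
  have e2 : k = (k - 2) + 2 := by omega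
  set a := d ^ (k - 2) with ha
  have hb : d ^ (k - 1) = a * d := by rw [e1, pow_succ]
  have hcc : d ^ k = a * d * d := by rw [e2, pow_add, ha]; ring
  have h3 : (d + 1) * (a * d) = a * d * d + a * d := by ring
  have h4 : (d + 1) * a = a * d + a := by ring
  have ha1 : a ≤ a * d := by
    have := Nat.mul_le_mul_left a (show 1 ≤ d by omega)
    simpa using this
  have ha2 : a * d ≤ a * d * d := by
    have := Nat.mul_le_mul_left (a * d) (show 1 ≤ d by omega)
    simpa using this
  rw [hb, h3] at hsum
  rw [h4] at hle
  rw [hcc]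
  omega

end KP

/-- The identifying number of the Kautz digraph `K(d,k)` is `d^k - d^(k-2)` for `d ≥ 3`
and `k ≥ 2`. -/
theorem kautz_id_number (d k : ℕ) (hd : 3 ≤ d) (hk : 2 ≤ k) :
    idNumber (KautzAdj d k) = d ^ k - d ^ (k - 2) := by
  have hmem : (d ^ k - d ^ (k - 2)) ∈
      {n | ∃ C : Set (KautzVertex d k), IsIdCode (KautzAdj d k) C ∧ C.ncard = n} :=
    ⟨KP.Cset hk, KP.isIdCode_C hd hk, KP.ncard_C hd hk⟩
  refine le_antisymm (Nat.sInf_le hmem) (le_csInf ⟨_, hmem⟩ ?_)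
  rintro n ⟨C, hC, rfl⟩
  exact KP.lower_bound hd hk C hC
end

section
/- For every integer k ≥ 2, the identifying number of the Kautz digraph K(2,k) is γ^ID(K(2,k)) = 2^k − 2^(k−2). -/
namespace KautzAux

variable {k : ℕ}

instance : Finite (KautzVertex 2 k) := by unfold KautzVertex; infer_instance

/-- total lookup -/
def L (x : KautzVertex 2 k) (n : ℕ) : Fin 3 :=
  if h : n < k then x.val ⟨n, h⟩ else 0

lemma L_eq (x : KautzVertex 2 k) {n : ℕ} (h : n < k) : L x n = x.val ⟨n, h⟩ := dif_pos h

lemma step_ne (x : KautzVertex 2 k) {n : ℕ} (h : n + 1 < k) : L x n ≠ L x (n+1) := by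
  rw [L_eq x (by omega : n < k), L_eq x h]
  exact x.prop ⟨n, by omega⟩ ⟨n+1, h⟩ rfl

lemma adj_iff {u x : KautzVertex 2 k} :
    KautzAdj 2 k u x ↔ ∀ n : ℕ, n + 1 < k → L x n = L u (n+1) := by
  constructor
  · intro h n hn
    rw [L_eq x (by omega : n < k), L_eq u hn]
    exact h ⟨n, by omega⟩ ⟨n+1, hn⟩ rfl
  · intro h i j hij
    have hj : (j : ℕ) < k := j.isLt
    have hn : (i : ℕ) + 1 < k := by omega
    have := h i.val hn
    rw [L_eq x i.isLt, L_eq u hn] at this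
    have hjj : (⟨(i:ℕ)+1, hn⟩ : Fin k) = j := Fin.ext hij.symm
    rwa [show (⟨(i:ℕ), i.isLt⟩ : Fin k) = i from rfl, hjj] at this

lemma ext_L {x y : KautzVertex 2 k} (h : ∀ n, n < k → L x n = L y n) : x = y := by
  apply Subtype.ext; funext i
  have := h i.val i.isLt
  rwa [L_eq x i.isLt, L_eq y i.isLt] at this

lemma self_not_adj (hk : 2 ≤ k) (x : KautzVertex 2 k) : ¬ KautzAdj 2 k x x := by
  intro h
  exact step_ne x (by omega : 0 + 1 < k) (adj_iff.1 h 0 (by omega))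

/-- prepend a letter -/
def prep (x : KautzVertex 2 k) (a : Fin 3) (ha : a ≠ L x 0) : KautzVertex 2 k :=
  ⟨fun i => if i.val = 0 then a else L x (i.val - 1), by
    intro i j hij
    have hj : (j : ℕ) < k := j.isLt
    simp only []
    rw [if_neg (by omega : ¬ (j : ℕ) = 0)]
    by_cases hi : (i : ℕ) = 0
    · rw [if_pos hi]
      have : (j : ℕ) - 1 = 0 := by omega
      rw [this]; exact ha
    · rw [if_neg hi]
      have := step_ne x (n := (i:ℕ) - 1) (by omega : (i:ℕ) - 1 + 1 < k)
      have e : (i:ℕ) - 1 + 1 = (j:ℕ) - 1 := by omega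
      rwa [e] at this⟩

lemma L_prep_zero (x : KautzVertex 2 k) (a : Fin 3) (ha : a ≠ L x 0) (hk : 0 < k) :
    L (prep x a ha) 0 = a := by
  rw [L_eq _ hk]; simp [prep]

lemma L_prep_succ (x : KautzVertex 2 k) (a : Fin 3) (ha : a ≠ L x 0) {n : ℕ}
    (h : n + 1 < k) : L (prep x a ha) (n+1) = L x n := by
  rw [L_eq _ h]; simp [prep]

lemma adj_prep (x : KautzVertex 2 k) (a : Fin 3) (ha : a ≠ L x 0) :
    KautzAdj 2 k (prep x a ha) x := by
  rw [adj_iff]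
  intro n hn
  rw [L_prep_succ x a ha hn]

lemma adj_ext {u u' x : KautzVertex 2 k} (hu : KautzAdj 2 k u x) (hu' : KautzAdj 2 k u' x)
    (h0 : L u 0 = L u' 0) : u = u' := by
  apply ext_L
  intro n hn
  match n with
  | 0 => exact h0
  | (m+1) => rw [← adj_iff.1 hu m hn, adj_iff.1 hu' m hn]

lemma adj_L_zero_ne {u x : KautzVertex 2 k} (hk : 2 ≤ k) (hu : KautzAdj 2 k u x) :
    L u 0 ≠ L x 0 := by
  have h1 := step_ne u (by omega : 0 + 1 < k)
  have h2 := adj_iff.1 hu 0 (by omega)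
  rw [← h2] at h1
  exact h1

lemma adj_eq_prep {u x : KautzVertex 2 k} (hk : 2 ≤ k) (hu : KautzAdj 2 k u x) :
    u = prep x (L u 0) (adj_L_zero_ne hk hu) :=
  adj_ext hu (adj_prep x _ _) (by rw [L_prep_zero _ _ _ (by omega)])

open Classical in
/-- tail-of-prefix alternation -/
noncomputable def altT (x : KautzVertex 2 k) : Prop :=
  ∀ n < k, 1 ≤ n → n + 2 ≤ k - 2 → L x n = L x (n+2)

open Classical in
/-- the offset `D` -/
noncomputable def DD (x : KautzVertex 2 k) : Fin 3 :=
  if k = 2 then 1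
  else if ((L x 1 = L x 0 + 2) ↔ (k % 2 = 0 ∧ altT x)) then 1 else 2

/-- the identifying code -/
def code (k : ℕ) : Set (KautzVertex 2 k) := {x | L x (k-1) = L x (k-2) + DD x}

lemma DD_cases (x : KautzVertex 2 k) : DD x = 1 ∨ DD x = 2 := by
  unfold DD; split_ifs <;> simp

lemma DD_eq_one {x : KautzVertex 2 k} (h2 : k ≠ 2)
    (hiff : (L x 1 = L x 0 + 2) ↔ (k % 2 = 0 ∧ altT x)) : DD x = 1 := by
  unfold DD; rw [if_neg h2, if_pos hiff]

lemma DD_eq_two {x : KautzVertex 2 k} (h2 : k ≠ 2)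
    (hiff : ¬ ((L x 1 = L x 0 + 2) ↔ (k % 2 = 0 ∧ altT x))) : DD x = 2 := by
  unfold DD; rw [if_neg h2, if_neg hiff]

lemma DD_congr (hk : 2 ≤ k) {x y : KautzVertex 2 k}
    (h : ∀ n, n < k - 1 → L x n = L y n) : DD x = DD y := by
  unfold DD
  by_cases h2 : k = 2
  · rw [if_pos h2, if_pos h2]
  · have hk3 : 3 ≤ k := by omega
    rw [if_neg h2, if_neg h2]
    have e0 : L x 0 = L y 0 := h 0 (by omega)
    have e1 : L x 1 = L y 1 := h 1 (by omega)
    have ea : altT x ↔ altT y := by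
      unfold altT
      constructor <;> intro ha n hn h1 h22
      · rw [← h n (by omega), ← h (n+2) (by omega)]; exact ha n hn h1 h22
      · rw [h n (by omega), h (n+2) (by omega)]; exact ha n hn h1 h22
    rw [e0, e1]
    by_cases hb : (L y 1 = L y 0 + 2) ↔ (k % 2 = 0 ∧ altT x)
    · rw [if_pos hb, if_pos (by tauto)]
    · rw [if_neg hb, if_neg (by tauto)]

/-- the sibling involution: flip the last letter -/
def sib (hk : 2 ≤ k) (x : KautzVertex 2 k) : KautzVertex 2 k :=
  ⟨fun i => if i.val = k - 1 then - L x (k-2) - L x (k-1) else x.val i, by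
    intro i j hij
    have hj : (j : ℕ) < k := j.isLt
    simp only []
    by_cases hjk : (j : ℕ) = k - 1
    · rw [if_pos hjk, if_neg (show ¬ (i:ℕ) = k - 1 by omega)]
      have hy : L x (k-1) ≠ L x (k-2) := by
        have := step_ne x (n := k - 2) (show k - 2 + 1 < k by omega)
        rw [show k - 2 + 1 = k - 1 from by omega] at this
        exact this.symm
      have hieq : i = (⟨k-2, show k-2<k by omega⟩ : Fin k) :=
        Fin.ext (show (i:ℕ) = k-2 by omega)
      rw [hieq, ← L_eq x (show k-2<k by omega)]
      exact (by decide : ∀ c y : Fin 3, y ≠ c → ¬ (c = -c - y)) _ _ hy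
    · rw [if_neg hjk, if_neg (by omega : ¬ (i:ℕ) = k - 1)]
      exact x.prop i j hij⟩

lemma L_sib_last (hk : 2 ≤ k) (x : KautzVertex 2 k) :
    L (sib hk x) (k-1) = - L x (k-2) - L x (k-1) := by
  rw [L_eq _ (by omega : k - 1 < k)]; simp [sib]

lemma L_sib_prefix (hk : 2 ≤ k) (x : KautzVertex 2 k) {n : ℕ} (h : n < k - 1) :
    L (sib hk x) n = L x n := by
  rw [L_eq _ (by omega : n < k), L_eq x (by omega : n < k)]
  simp only [sib]
  rw [if_neg (by omega : ¬ n = k - 1)]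

lemma sib_last_ne (hk : 2 ≤ k) (x : KautzVertex 2 k) :
    L (sib hk x) (k-1) ≠ L x (k-1) := by
  rw [L_sib_last hk x]
  have hy := step_ne x (n := k - 2) (by omega : k - 2 + 1 < k)
  rw [(by omega : k - 2 + 1 = k - 1)] at hy
  exact (by decide : ∀ c y : Fin 3, y ≠ c → ¬ (-c - y = y)) _ _ hy.symm

lemma sib_ne (hk : 2 ≤ k) (x : KautzVertex 2 k) : sib hk x ≠ x := by
  intro h
  exact sib_last_ne hk x (by rw [h])

lemma sib_sib (hk : 2 ≤ k) (x : KautzVertex 2 k) : sib hk (sib hk x) = x := by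
  apply ext_L
  intro n hn
  by_cases hn1 : n = k - 1
  · subst hn1
    rw [L_sib_last hk _, L_sib_last hk x, L_sib_prefix hk x (by omega : k - 2 < k - 1)]
    exact (by decide : ∀ c y : Fin 3, -c - (-c - y) = y) _ _
  · rw [L_sib_prefix hk _ (by omega), L_sib_prefix hk x (by omega)]

lemma sib_inj (hk : 2 ≤ k) : Function.Injective (sib hk) :=
  Function.LeftInverse.injective (sib_sib hk)

/-- sibling dichotomy for the code -/
lemma code_sib (hk : 2 ≤ k) (x : KautzVertex 2 k) : x ∈ code k ↔ sib hk x ∉ code k := by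
  have hc2 : L (sib hk x) (k-2) = L x (k-2) := L_sib_prefix hk x (by omega)
  have hD : DD (sib hk x) = DD x := DD_congr hk (fun n hn => L_sib_prefix hk x hn)
  have hy := step_ne x (n := k - 2) (by omega : k - 2 + 1 < k)
  rw [(by omega : k - 2 + 1 = k - 1)] at hy
  replace hy := hy.symm
  show (L x (k-1) = L x (k-2) + DD x) ↔ ¬ (L (sib hk x) (k-1) = L (sib hk x) (k-2) + DD (sib hk x))
  rw [hc2, hD, L_sib_last hk x]
  exact (by decide : ∀ c y d : Fin 3, y ≠ c → (d = 1 ∨ d = 2) →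
    ((y = c + d) ↔ ¬(-c - y = c + d))) _ _ _ hy (DD_cases x)

/-- same prefix and distinct implies sibling -/
lemma eq_sib_of_samePrefix (hk : 2 ≤ k) {x y : KautzVertex 2 k} (hne : x ≠ y)
    (h : ∀ n, n < k - 1 → L x n = L y n) : y = sib hk x := by
  apply ext_L
  intro n hn
  by_cases hn1 : n = k - 1
  · subst hn1
    rw [L_sib_last hk x]
    have hyx : L y (k-1) ≠ L x (k-1) := by
      intro he
      exact hne (ext_L (fun n hn => by
        by_cases h1 : n = k - 1
        · rw [h1, he]
        · exact h n (by omega)))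
    have hyc : L y (k-1) ≠ L y (k-2) := by
      have := step_ne y (n := k-2) (by omega : k - 2 + 1 < k)
      rw [(by omega : k - 2 + 1 = k - 1)] at this
      exact this.symm
    have hxc := step_ne x (n := k-2) (by omega : k - 2 + 1 < k)
    rw [(by omega : k - 2 + 1 = k - 1)] at hxc
    rw [← h (k-2) (by omega)] at hyc
    exact (by decide : ∀ c z w : Fin 3, z ≠ c → w ≠ c → w ≠ z → w = -c - z) _ _ _
      hxc.symm hyc hyx
  · rw [L_sib_prefix hk x (by omega), h n (by omega)]

lemma alt_L (x : KautzVertex 2 k) (halt : ∀ n, n + 2 ≤ k - 1 → L x n = L x (n+2)) :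
    ∀ n, n < k → L x n = if n % 2 = 0 then L x 0 else L x 1 := by
  intro n
  induction n using Nat.strong_induction_on with
  | _ n ih =>
    match n with
    | 0 => intro _; simp
    | 1 => intro _; simp
    | (m+2) =>
      intro h
      have h1 := halt m (by omega)
      have e : (m+2) % 2 = m % 2 := by omega
      rw [← h1, ih m (by omega) (by omega), e]

lemma mem_code_iff (x : KautzVertex 2 k) :
    x ∈ code k ↔ L x (k-1) = L x (k-2) + DD x := Iff.rfl

lemma mutual_not_code (hk : 2 ≤ k) {x y : KautzVertex 2 k} (hx : x ∈ code k)
    (hy : y ∈ code k) (hxy : KautzAdj 2 k x y) (hyx : KautzAdj 2 k y x) : False := by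
  rw [mem_code_iff] at hx hy
  by_cases h2 : k = 2
  · subst h2
    have e1 : L y 0 = L x 1 := adj_iff.1 hxy 0 (by omega)
    have e2 : L x 0 = L y 1 := adj_iff.1 hyx 0 (by omega)
    have dx : DD x = 1 := if_pos rfl
    have dy : DD y = 1 := if_pos rfl
    rw [dx] at hx; rw [dy] at hy
    simp only [show (2:ℕ) - 1 = 1 from rfl, show (2:ℕ) - 2 = 0 from rfl] at hx hy
    rw [hx] at e1
    rw [hy, e1] at e2
    exact (by decide : ∀ a : Fin 3, ¬ (a = a + 1 + 1)) _ e2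
  · have hk3 : 3 ≤ k := by omega
    have halt : ∀ n, n + 2 ≤ k - 1 → L x n = L x (n+2) := by
      intro n hn
      have e1 : L x n = L y (n+1) := adj_iff.1 hyx n (by omega)
      have e2 : L y (n+1) = L x (n+2) := adj_iff.1 hxy (n+1) (by omega)
      rw [e1, e2]
    have hA : altT x := fun n _ _ h2' => halt n (by omega)
    have hab : L x 1 ≠ L x 0 := (step_ne x (show 0 + 1 < k by omega)).symm
    have hL1 := alt_L x halt (k-1) (by omega)
    have hL2 := alt_L x halt (k-2) (by omega)
    rcases Nat.even_or_odd k with hke | hko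
    · have hk0 : k % 2 = 0 := Nat.even_iff.1 hke
      rw [if_neg (show ¬ (k-1) % 2 = 0 by omega)] at hL1
      rw [if_pos (show (k-2) % 2 = 0 by omega)] at hL2
      rw [hL1, hL2] at hx
      by_cases hb : L x 1 = L x 0 + 2
      · rw [DD_eq_one h2 ⟨fun _ => ⟨hk0, hA⟩, fun _ => hb⟩, hb] at hx
        exact (by decide : ∀ a : Fin 3, ¬ (a + 2 = a + 1)) _ hx
      · rw [DD_eq_two h2 (fun hiff => hb (hiff.2 ⟨hk0, hA⟩))] at hx
        exact hb hx
    · have hk0 : ¬ k % 2 = 0 := by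
        have := Nat.odd_iff.1 hko; omega
      rw [if_pos (show (k-1) % 2 = 0 by have := Nat.odd_iff.1 hko; omega)] at hL1
      rw [if_neg (show ¬ (k-2) % 2 = 0 by have := Nat.odd_iff.1 hko; omega)] at hL2
      rw [hL1, hL2] at hx
      by_cases hb : L x 1 = L x 0 + 2
      · rw [DD_eq_two h2 (fun hiff => hk0 (hiff.1 hb).1), hb] at hx
        exact (by decide : ∀ a : Fin 3, ¬ (a = a + 2 + 2)) _ hx
      · rw [DD_eq_one h2 ⟨fun h' => absurd h' hb, fun h' => absurd h'.1 hk0⟩] at hx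
        have hb1 : L x 1 = L x 0 + 1 :=
          (by decide : ∀ a b : Fin 3, b ≠ a → ¬ (b = a + 2) → b = a + 1) _ _ hab hb
        rw [hb1] at hx
        exact (by decide : ∀ a : Fin 3, ¬ (a = a + 1 + 1)) _ hx

lemma prep_congr (x : KautzVertex 2 k) {a a' : Fin 3} (ha : a ≠ L x 0) (ha' : a' ≠ L x 0)
    (h : a = a') : prep x a ha = prep x a' ha' := by
  subst h; rfl

lemma exists_unique_code_nbr (hk : 2 ≤ k) (x : KautzVertex 2 k) :
    ∃! u, u ∈ code k ∧ KautzAdj 2 k u x := by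
  set z := L x 0 with hz
  have ha1 : z + 1 ≠ L x 0 := by rw [← hz]; exact (by decide : ∀ z : Fin 3, z + 1 ≠ z) z
  have ha2 : z + 2 ≠ L x 0 := by rw [← hz]; exact (by decide : ∀ z : Fin 3, z + 2 ≠ z) z
  set u1 := prep x (z+1) ha1 with hu1
  set u2 := prep x (z+2) ha2 with hu2
  have hL10 : L u1 0 = z + 1 := L_prep_zero x _ _ (by omega)
  have hL20 : L u2 0 = z + 2 := L_prep_zero x _ _ (by omega)
  have key : (u1 ∈ code k) ↔ ¬ (u2 ∈ code k) := by
    by_cases h2 : k = 2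
    · subst h2
      have e11 : L u1 1 = z := L_prep_succ x _ _ (by omega : 0 + 1 < 2)
      have e21 : L u2 1 = z := L_prep_succ x _ _ (by omega : 0 + 1 < 2)
      have m1 : ¬ (u1 ∈ code 2) := by
        rw [mem_code_iff]
        simp only [show (2:ℕ) - 1 = 1 from rfl, show (2:ℕ) - 2 = 0 from rfl]
        rw [e11, hL10, show DD u1 = 1 from if_pos rfl]
        exact (by decide : ∀ z : Fin 3, ¬ (z = z + 1 + 1)) z
      have m2 : u2 ∈ code 2 := by
        rw [mem_code_iff]
        simp only [show (2:ℕ) - 1 = 1 from rfl, show (2:ℕ) - 2 = 0 from rfl]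
        rw [e21, hL20, show DD u2 = 1 from if_pos rfl]
        exact (by decide : ∀ z : Fin 3, z = z + 2 + 1) z
      exact ⟨fun h => absurd h m1, fun h => absurd m2 h⟩
    · have hk3 : 3 ≤ k := by omega
      have e1 : k - 1 = (k - 2) + 1 := by omega
      have e2 : k - 2 = (k - 3) + 1 := by omega
      have hr1 : L u1 (k-1) = L x (k-2) := by rw [e1]; exact L_prep_succ x _ _ (by omega)
      have hr2 : L u1 (k-2) = L x (k-3) := by rw [e2]; exact L_prep_succ x _ _ (by omega)
      have hr1' : L u2 (k-1) = L x (k-2) := by rw [e1]; exact L_prep_succ x _ _ (by omega)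
      have hr2' : L u2 (k-2) = L x (k-3) := by rw [e2]; exact L_prep_succ x _ _ (by omega)
      have e11 : L u1 1 = z := L_prep_succ x _ _ (by omega : 0 + 1 < k)
      have e21 : L u2 1 = z := L_prep_succ x _ _ (by omega : 0 + 1 < k)
      have hb1 : L u1 1 = L u1 0 + 2 := by
        rw [e11, hL10]; exact (by decide : ∀ z : Fin 3, z = z + 1 + 2) z
      have hb2 : ¬ (L u2 1 = L u2 0 + 2) := by
        rw [e21, hL20]; exact (by decide : ∀ z : Fin 3, ¬ (z = z + 2 + 2)) z
      have hval : ∀ n, 1 ≤ n → n < k → L u1 n = L u2 n := by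
        intro n h1 hn
        obtain ⟨m, rfl⟩ : ∃ m, n = m + 1 := ⟨n - 1, by omega⟩
        rw [L_prep_succ x _ _ hn, L_prep_succ x _ _ hn]
      have haltiff : altT u1 ↔ altT u2 := by
        unfold altT
        constructor <;> intro hA n hn h1 h22
        · rw [← hval n h1 (by omega), ← hval (n+2) (by omega) (by omega)]
          exact hA n hn h1 h22
        · rw [hval n h1 (by omega), hval (n+2) (by omega) (by omega)]
          exact hA n hn h1 h22
      have hrc : L x (k-2) ≠ L x (k-3) := by
        have := step_ne x (n := k - 3) (by omega : k - 3 + 1 < k)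
        rw [show k - 3 + 1 = k - 2 from by omega] at this
        exact this.symm
      rw [mem_code_iff, mem_code_iff, hr1, hr2, hr1', hr2']
      by_cases ht : k % 2 = 0 ∧ altT u1
      · rw [DD_eq_one h2 ⟨fun _ => ht, fun _ => hb1⟩,
          DD_eq_two h2 (fun hiff => hb2 (hiff.2 ⟨ht.1, haltiff.1 ht.2⟩))]
        exact (by decide : ∀ r c : Fin 3, r ≠ c → ((r = c + 1) ↔ ¬ (r = c + 2))) _ _ hrc
      · rw [DD_eq_two h2 (fun hiff => ht (hiff.1 hb1)),
          DD_eq_one h2 ⟨fun h' => absurd h' hb2,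
            fun h' => absurd ⟨h'.1, haltiff.2 h'.2⟩ ht⟩]
        exact (by decide : ∀ r c : Fin 3, r ≠ c → ((r = c + 2) ↔ ¬ (r = c + 1))) _ _ hrc
  have hnbr : ∀ u, KautzAdj 2 k u x → u = u1 ∨ u = u2 := by
    intro u hu
    have h0 := adj_L_zero_ne hk hu
    have := adj_eq_prep hk hu
    rcases (by decide : ∀ a z : Fin 3, a ≠ z → a = z + 1 ∨ a = z + 2) _ _ h0 with h | h
    · left; rw [this]; exact prep_congr x _ _ h
    · right; rw [this]; exact prep_congr x _ _ h
  by_cases h1 : u1 ∈ code k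
  · refine ⟨u1, ⟨h1, adj_prep x _ _⟩, ?_⟩
    rintro u ⟨huc, huadj⟩
    rcases hnbr u huadj with h | h
    · exact h
    · exact absurd (h ▸ huc) (key.1 h1)
  · refine ⟨u2, ⟨not_not.1 (fun h => h1 (key.2 h)), adj_prep x _ _⟩, ?_⟩
    rintro u ⟨huc, huadj⟩
    rcases hnbr u huadj with h | h
    · exact absurd (h ▸ huc) h1
    · exact h

section WithDefs

lemma mem_ncc {z w : KautzVertex 2 k} {S : Set (KautzVertex 2 k)} :
    z ∈ NminusClosed (KautzAdj 2 k) w ∩ S ↔ (z = w ∨ KautzAdj 2 k z w) ∧ z ∈ S := by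
  simp [NminusClosed, Nminus, Set.mem_insert_iff]

lemma sep_case (hk : 2 ≤ k) {x y : KautzVertex 2 k} (hx : x ∈ code k) (hy : y ∉ code k)
    (heq : NminusClosed (KautzAdj 2 k) x ∩ code k = NminusClosed (KautzAdj 2 k) y ∩ code k) :
    False := by
  obtain ⟨ux, ⟨huxc, huxa⟩, -⟩ := exists_unique_code_nbr hk x
  obtain ⟨uy, ⟨huyc, huya⟩, huyu⟩ := exists_unique_code_nbr hk y
  have hx1 : x ∈ NminusClosed (KautzAdj 2 k) y ∩ code k := by
    rw [← heq]; exact mem_ncc.2 ⟨Or.inl rfl, hx⟩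
  have hxuy : x = uy := by
    rcases (mem_ncc.1 hx1).1 with h | h
    · exact absurd (h ▸ hx) hy
    · exact huyu x ⟨hx, h⟩
  have hux1 : ux ∈ NminusClosed (KautzAdj 2 k) y ∩ code k := by
    rw [← heq]; exact mem_ncc.2 ⟨Or.inr huxa, huxc⟩
  have huxuy : ux = uy := by
    rcases (mem_ncc.1 hux1).1 with h | h
    · exact absurd (h ▸ huxc) hy
    · exact huyu ux ⟨huxc, h⟩
  have : x = ux := by rw [hxuy, huxuy]
  exact self_not_adj hk x (this ▸ huxa)

theorem code_isIdCode (hk : 2 ≤ k) : IsIdCode (KautzAdj 2 k) (code k) := by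
  constructor
  · intro v
    obtain ⟨u, ⟨huc, huadj⟩, -⟩ := exists_unique_code_nbr hk v
    exact Or.inr ⟨u, huc, huadj⟩
  · intro x y hxy heq
    by_cases hx : x ∈ code k <;> by_cases hy : y ∈ code k
    · -- both in the code
      have hx1 : x ∈ NminusClosed (KautzAdj 2 k) y ∩ code k := by
        rw [← heq]; exact mem_ncc.2 ⟨Or.inl rfl, hx⟩
      have hy1 : y ∈ NminusClosed (KautzAdj 2 k) x ∩ code k := by
        rw [heq]; exact mem_ncc.2 ⟨Or.inl rfl, hy⟩
      have hAxy : KautzAdj 2 k x y := by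
        rcases (mem_ncc.1 hx1).1 with h | h
        · exact absurd h hxy
        · exact h
      have hAyx : KautzAdj 2 k y x := by
        rcases (mem_ncc.1 hy1).1 with h | h
        · exact absurd h.symm hxy
        · exact h
      exact mutual_not_code hk hx hy hAxy hAyx
    · exact sep_case hk hx hy heq
    · exact sep_case hk hy hx heq.symm
    · -- both outside the code
      obtain ⟨ux, ⟨huxc, huxa⟩, -⟩ := exists_unique_code_nbr hk x
      obtain ⟨uy, ⟨huyc, huya⟩, huyu⟩ := exists_unique_code_nbr hk y
      have hux1 : ux ∈ NminusClosed (KautzAdj 2 k) y ∩ code k := by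
        rw [← heq]; exact mem_ncc.2 ⟨Or.inr huxa, huxc⟩
      have huxuy : ux = uy := by
        rcases (mem_ncc.1 hux1).1 with h | h
        · exact absurd (h ▸ huxc) hy
        · exact huyu ux ⟨huxc, h⟩
      have hpre : ∀ n, n < k - 1 → L x n = L y n := by
        intro n hn
        rw [adj_iff.1 huxa n (by omega), huxuy, ← adj_iff.1 huya n (by omega)]
      have hysib : y = sib hk x := eq_sib_of_samePrefix hk hxy hpre
      rw [hysib] at hy
      exact hx ((code_sib hk x).mpr hy)

end WithDefs

/-! ### Counting -/

def decF (s : Fin 3) (d : Fin (k-1) → Fin 2) : ℕ → Fin 3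
  | 0 => s
  | (n+1) => decF s d n + (if h : n < k - 1 then (if d ⟨n, h⟩ = 0 then 1 else 2) else 1)

lemma decF_succ_ne (s : Fin 3) (d : Fin (k-1) → Fin 2) (n : ℕ) :
    decF s d n ≠ decF s d (n+1) := by
  show decF s d n ≠ decF s d n + _
  split_ifs with h h'
  · exact (by decide : ∀ z : Fin 3, z ≠ z + 1) _
  · exact (by decide : ∀ z : Fin 3, z ≠ z + 2) _
  · exact (by decide : ∀ z : Fin 3, z ≠ z + 1) _

def decode (s : Fin 3) (d : Fin (k-1) → Fin 2) : KautzVertex 2 k :=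
  ⟨fun i => decF s d i.val, by
    intro i j hij
    show decF s d i.val ≠ decF s d j.val
    rw [hij]
    exact decF_succ_ne s d i.val⟩

lemma L_decode {s : Fin 3} {d : Fin (k-1) → Fin 2} {n : ℕ} (h : n < k) :
    L (decode s d) n = decF s d n := by
  rw [L_eq _ h]; rfl

noncomputable def equivV (hk : 2 ≤ k) : KautzVertex 2 k ≃ Fin 3 × (Fin (k-1) → Fin 2) where
  toFun x := (L x 0, fun j => if L x (j.val+1) = L x j.val + 1 then 0 else 1)
  invFun p := decode p.1 p.2
  left_inv x := by
    apply ext_L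
    have key : ∀ n, n < k → decF (L x 0)
        (fun j : Fin (k-1) => if L x (j.val+1) = L x j.val + 1 then 0 else 1) n = L x n := by
      intro n
      induction n with
      | zero => intro _; rfl
      | succ m ih =>
        intro hm
        show decF _ _ m + _ = L x (m+1)
        rw [ih (by omega), dif_pos (by omega : m < k - 1)]
        show (L x m + if (if L x (m+1) = L x m + 1 then (0:Fin 2) else 1) = 0
          then 1 else 2) = L x (m+1)
        by_cases hc : L x (m+1) = L x m + 1
        · rw [if_pos hc, if_pos rfl]
          exact hc.symm
        · rw [if_neg hc, if_neg (by decide : ¬ ((1:Fin 2) = 0))]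
          have h1 : L x (m+1) ≠ L x m := (step_ne x hm).symm
          exact ((by decide : ∀ u v : Fin 3, v ≠ u → ¬ (v = u + 1) → u + 2 = v) _ _ h1 hc)
    intro n hn
    rw [L_decode hn, key n hn]
  right_inv p := by
    obtain ⟨s, d⟩ := p
    refine Prod.ext ?_ ?_
    · show L (decode s d) 0 = s
      rw [L_decode (by omega : 0 < k)]; rfl
    · funext j
      show (if L (decode s d) (j.val+1) = L (decode s d) j.val + 1 then (0:Fin 2) else 1) = d j
      have hj : (j:ℕ) < k - 1 := j.isLt
      rw [L_decode (by omega : j.val + 1 < k), L_decode (by omega : j.val < k)]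
      show (if decF s d j.val + _ = decF s d j.val + 1 then (0:Fin 2) else 1) = d j
      rw [dif_pos hj]
      have hjj : (⟨(j:ℕ), hj⟩ : Fin (k-1)) = j := Fin.ext rfl
      rw [hjj]
      by_cases hd : d j = 0
      · rw [hd, if_pos rfl, if_pos rfl]
      · have hd1 : d j = 1 := (by decide : ∀ b : Fin 2, b ≠ 0 → b = 1) _ hd
        rw [hd1, if_neg (by decide : ¬ ((1:Fin 2) = 0)),
          if_neg ((by decide : ∀ z : Fin 3, ¬ (z + 2 = z + 1)) _)]

lemma card_V (hk : 2 ≤ k) : Nat.card (KautzVertex 2 k) = 3 * 2 ^ (k-1) := by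
  rw [Nat.card_congr (equivV hk)]
  simp [Nat.card_eq_fintype_card]

lemma two_mul_ncard (hk : 2 ≤ k) {S : Set (KautzVertex 2 k)}
    (hS : ∀ x, x ∈ S ↔ sib hk x ∉ S) : 2 * S.ncard = 3 * 2 ^ (k-1) := by
  have hcover : (Set.univ : Set (KautzVertex 2 k)) = S ∪ (sib hk '' S) := by
    ext z
    simp only [Set.mem_univ, true_iff, Set.mem_union]
    by_cases hz : z ∈ S
    · exact Or.inl hz
    · refine Or.inr ⟨sib hk z, ?_, sib_sib hk z⟩
      by_contra hsz
      exact hz ((hS z).mpr hsz)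
  have hdisj : Disjoint S (sib hk '' S) := by
    rw [Set.disjoint_left]
    rintro z hz ⟨w, hw, rfl⟩
    exact (hS w).1 hw hz
  have hun := Set.ncard_union_eq hdisj (Set.toFinite _) (Set.toFinite _)
  have himg : (sib hk '' S).ncard = S.ncard := Set.ncard_image_of_injective _ (sib_inj hk)
  have huniv : (Set.univ : Set (KautzVertex 2 k)).ncard = 3 * 2 ^ (k-1) := by
    rw [Set.ncard_univ]; exact card_V hk
  rw [hcover, hun, himg] at huniv
  omega

lemma card_code (hk : 2 ≤ k) : (code k).ncard = 3 * 2 ^ (k-2) := by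
  have h := two_mul_ncard hk (fun x => code_sib hk x)
  have e : 3 * 2 ^ (k-1) = 2 * (3 * 2 ^ (k-2)) := by
    rw [show k - 1 = (k-2) + 1 from by omega, pow_succ]; ring
  omega

lemma adj_sib (hk : 2 ≤ k) (z x : KautzVertex 2 k) :
    KautzAdj 2 k z x ↔ KautzAdj 2 k z (sib hk x) := by
  rw [adj_iff, adj_iff]
  constructor <;> intro h n hn
  · rw [L_sib_prefix hk x (by omega)]; exact h n hn
  · rw [← L_sib_prefix hk x (show n < k - 1 by omega)]; exact h n hn

lemma code_lower_bound (hk : 2 ≤ k) {C : Set (KautzVertex 2 k)}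
    (hC : IsIdCode (KautzAdj 2 k) C) : 3 * 2 ^ (k-2) ≤ C.ncard := by
  classical
  have hdom : ∀ x, x ∈ C ∨ sib hk x ∈ C := by
    intro x
    by_contra h
    push_neg at h
    apply hC.2 x (sib hk x) (Ne.symm (sib_ne hk x))
    ext z
    rw [mem_ncc, mem_ncc]
    constructor
    · rintro ⟨hz1, hz2⟩
      refine ⟨?_, hz2⟩
      rcases hz1 with rfl | hadj
      · exact absurd hz2 h.1
      · exact Or.inr ((adj_sib hk z x).1 hadj)
    · rintro ⟨hz1, hz2⟩
      refine ⟨?_, hz2⟩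
      rcases hz1 with rfl | hadj
      · exact absurd hz2 h.2
      · exact Or.inr ((adj_sib hk z x).2 hadj)
  set φ : KautzVertex 2 k → KautzVertex 2 k := fun w => if w ∈ C then w else sib hk w with hφ
  have hφmem : ∀ w, φ w = w ∨ φ w = sib hk w := by
    intro w; by_cases hw : w ∈ C
    · exact Or.inl (if_pos hw)
    · exact Or.inr (if_neg hw)
  have himg : φ '' code k ⊆ C := by
    rintro _ ⟨w, hw, rfl⟩
    by_cases hwC : w ∈ C
    · rw [hφ]; simp [hwC]
    · rw [hφ]; simp only [if_neg hwC]
      exact (hdom w).resolve_left hwC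
  have hinj : Set.InjOn φ (code k) := by
    intro a ha b hb hab
    rcases hφmem a with h1 | h1 <;> rcases hφmem b with h2 | h2 <;>
      rw [h1, h2] at hab
    · exact hab
    · exact absurd (hab ▸ ha) ((code_sib hk b).1 hb)
    · exact absurd (hab ▸ ((code_sib hk a).1 ha) : b ∉ code k) (fun h => h hb)
    · exact sib_inj hk hab
  calc 3 * 2 ^ (k-2) = (code k).ncard := (card_code hk).symm
    _ = (φ '' code k).ncard := (Set.ncard_image_of_injOn hinj).symm
    _ ≤ C.ncard := Set.ncard_le_ncard himg (Set.toFinite C)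

end KautzAux

/-- The identifying number of the Kautz digraph `K(2,k)` is `2^k - 2^(k-2)` for `k ≥ 2`. -/
theorem kautz_two_id_number (k : ℕ) (hk : 2 ≤ k) :
    idNumber (KautzAdj 2 k) = 2 ^ k - 2 ^ (k - 2) := by
  open KautzAux in
  have hmem : (3 * 2 ^ (k-2)) ∈
      {n | ∃ C : Set (KautzVertex 2 k), IsIdCode (KautzAdj 2 k) C ∧ C.ncard = n} :=
    ⟨KautzAux.code k, KautzAux.code_isIdCode hk, KautzAux.card_code hk⟩
  have h1 : idNumber (KautzAdj 2 k) ≤ 3 * 2 ^ (k-2) := Nat.sInf_le hmem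
  have h2 : 3 * 2 ^ (k-2) ≤ idNumber (KautzAdj 2 k) := by
    obtain ⟨C, hC, hcard⟩ := Nat.sInf_mem (⟨_, hmem⟩ : Set.Nonempty
      {n | ∃ C : Set (KautzVertex 2 k), IsIdCode (KautzAdj 2 k) C ∧ C.ncard = n})
    rw [idNumber, ← hcard]
    exact KautzAux.code_lower_bound hk hC
  have h3 : 2 ^ k = 2 ^ (k-2) * 2 ^ 2 := by
    rw [← pow_add]; congr 1; omega
  omega
end
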